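/- In the setting of an irreducible row-stochastic matrix P with contraction ratios c_{ij} ∈ (0,1) and positive initial probability vector (q_i), let s_k := u_k / l_k where u_k := Σ_{σ ∈ G_k} m_σ log m_σ and l_k := Σ_{σ ∈ G_k} m_σ log c_σ, and let s_0 := u_0/l_0 with u_0 := Σ_i v_i Σ_j p_{ij} log p_{ij} and l_0 := Σ_i v_i Σ_j p_{ij} log c_{ij}. Then there exists a constant C_2 such that |s_k − s_0| ≤ C_2 / k for all sufficiently large k. -/

import Mathlib

open Finset

/-- Product of the entries of `A` along a word of length `k+1`. -/
noncomputable def wprod {N k : ℕ} (A : Matrix (Fin N) (Fin N) ℝ)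
    (σ : Fin (k + 1) → Fin N) : ℝ :=
  ∏ t : Fin k, A (σ t.castSucc) (σ t.succ)

/-- `u_k = ∑_{σ ∈ G_k} m_σ log m_σ` (convention `0 log 0 = 0`). -/
noncomputable def useq {N : ℕ} (q : Fin N → ℝ) (P : Matrix (Fin N) (Fin N) ℝ)
    (k : ℕ) : ℝ :=
  ∑ σ : Fin (k - 1 + 1) → Fin N,
    (q (σ 0) * wprod P σ) * Real.log (q (σ 0) * wprod P σ)

/-- `l_k = ∑_{σ ∈ G_k} m_σ log c_σ`. -/
noncomputable def lseq {N : ℕ} (q : Fin N → ℝ) (P c : Matrix (Fin N) (Fin N) ℝ)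
    (k : ℕ) : ℝ :=
  ∑ σ : Fin (k - 1 + 1) → Fin N,
    (q (σ 0) * wprod P σ) * Real.log (wprod c σ)

section aux
variable {N : ℕ} (q : Fin N → ℝ) (P c : Matrix (Fin N) (Fin N) ℝ)

/-- weight of a word -/
noncomputable def mw {n : ℕ} (σ : Fin (n+1) → Fin N) : ℝ := q (σ 0) * wprod P σ

lemma sum_snoc {n : ℕ} (f : (Fin (n+1+1) → Fin N) → ℝ) :
    ∑ σ : Fin (n+1+1) → Fin N, f σ =
      ∑ τ : Fin (n+1) → Fin N, ∑ x : Fin N, f (Fin.snoc τ x) := by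
  rw [← (Fin.snocEquiv (fun _ => Fin N)).sum_comp f, Fintype.sum_prod_type,
    Finset.sum_comm]
  simp [Fin.snocEquiv]

lemma snoc_zero'' {n : ℕ} (τ : Fin (n+1) → Fin N) (x : Fin N) :
    (Fin.snoc τ x : Fin (n+1+1) → Fin N) 0 = τ 0 := by
  rw [show (0 : Fin (n+1+1)) = Fin.castSucc 0 by simp, Fin.snoc_castSucc]

lemma wprod_snoc {n : ℕ} (A : Matrix (Fin N) (Fin N) ℝ) (τ : Fin (n+1) → Fin N) (x : Fin N) :
    wprod A (Fin.snoc τ x) = wprod A τ * A (τ (Fin.last n)) x := by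
  unfold wprod
  rw [Fin.prod_univ_castSucc]
  congr 1
  · exact Finset.prod_congr rfl fun t _ => by
      rw [Fin.succ_castSucc, Fin.snoc_castSucc, Fin.snoc_castSucc]
  · rw [Fin.succ_last, Fin.snoc_castSucc, Fin.snoc_last]

lemma mw_snoc {n : ℕ} (τ : Fin (n+1) → Fin N) (x : Fin N) :
    mw q P (Fin.snoc τ x) = mw q P τ * P (τ (Fin.last n)) x := by
  unfold mw
  rw [snoc_zero'', wprod_snoc, mul_assoc]

lemma mw_nonneg (hq : ∀ i, 0 < q i) (hnn : ∀ i j, 0 ≤ P i j) {n : ℕ}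
    (τ : Fin (n+1) → Fin N) : 0 ≤ mw q P τ :=
  mul_nonneg (hq _).le (Finset.prod_nonneg fun _ _ => hnn _ _)

lemma vecMul_apply (M : Matrix (Fin N) (Fin N) ℝ) (j : Fin N) :
    Matrix.vecMul q M j = ∑ i, q i * M i j := by
  simp [Matrix.vecMul, dotProduct]

lemma sum_mw_mul : ∀ (n : ℕ) (f : Fin N → ℝ),
    ∑ σ : Fin (n+1) → Fin N, mw q P σ * f (σ (Fin.last n))
      = ∑ i, Matrix.vecMul q (P^n) i * f i := by
  intro n
  induction n with
  | zero =>
    intro f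
    rw [← (Equiv.funUnique (Fin 1) (Fin N)).symm.sum_comp]
    simp [mw, wprod, Matrix.vecMul_one, Equiv.funUnique]
  | succ n ih =>
    intro f
    rw [sum_snoc (N := N) (fun σ => mw q P σ * f (σ (Fin.last (n+1))))]
    have step : ∀ (τ : Fin (n+1) → Fin N) (x : Fin N),
        mw q P (Fin.snoc τ x) * f ((Fin.snoc τ x : Fin (n+1+1) → Fin N) (Fin.last (n+1)))
          = mw q P τ * (P (τ (Fin.last n)) x * f x) := by
      intro τ x
      rw [mw_snoc, Fin.snoc_last, mul_assoc]
    simp only [step]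
    calc ∑ τ : Fin (n+1) → Fin N, ∑ x, mw q P τ * (P (τ (Fin.last n)) x * f x)
        = ∑ τ : Fin (n+1) → Fin N, mw q P τ * ∑ x, P (τ (Fin.last n)) x * f x := by
          exact Finset.sum_congr rfl fun τ _ => by rw [Finset.mul_sum]
      _ = ∑ i, Matrix.vecMul q (P^n) i * ∑ x, P i x * f x :=
          ih (fun i => ∑ x, P i x * f x)
      _ = ∑ i, ∑ x, Matrix.vecMul q (P^n) i * P i x * f x := by
          exact Finset.sum_congr rfl fun i _ => by
            rw [Finset.mul_sum]; exact Finset.sum_congr rfl fun x _ => by ring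
      _ = ∑ x, ∑ i, Matrix.vecMul q (P^n) i * P i x * f x := Finset.sum_comm
      _ = ∑ x, Matrix.vecMul q (P^(n+1)) x * f x := by
          refine Finset.sum_congr rfl fun x _ => ?_
          rw [pow_succ, ← Matrix.vecMul_vecMul, vecMul_apply, Finset.sum_mul]

/-- entropy-type per-state quantity -/
lemma inner_sum_F (hnn : ∀ i j, 0 ≤ P i j) (hrow : ∀ i, ∑ j, P i j = 1)
    {m : ℝ} (hm : 0 ≤ m) (l : Fin N) :
    ∑ x, (m * P l x) * Real.log (m * P l x)
      = m * Real.log m + m * ∑ x, P l x * Real.log (P l x) := by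
  rcases hm.eq_or_lt with h|h
  · simp [← h]
  · have key : ∀ x, (m * P l x) * Real.log (m * P l x)
        = (m * Real.log m) * P l x + m * (P l x * Real.log (P l x)) := by
      intro x
      rcases (hnn l x).eq_or_lt with h0|h0
      · simp [← h0]
      · rw [Real.log_mul h.ne' h0.ne']; ring
    simp only [key]
    rw [Finset.sum_add_distrib, ← Finset.mul_sum, ← Finset.mul_sum, hrow l, mul_one]

lemma inner_sum_L (hnn : ∀ i j, 0 ≤ P i j) (hrow : ∀ i, ∑ j, P i j = 1)
    {m w : ℝ} (hm : 0 ≤ m) (hw : 0 < m → 0 < w)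
    (l : Fin N) {d : Fin N → ℝ} (hd : ∀ x, 0 < P l x → 0 < d x) :
    ∑ x, (m * P l x) * Real.log (w * d x)
      = m * Real.log w + m * ∑ x, P l x * Real.log (d x) := by
  rcases hm.eq_or_lt with h|h
  · simp [← h]
  · have hw' := hw h
    have key : ∀ x, (m * P l x) * Real.log (w * d x)
        = (m * Real.log w) * P l x + m * (P l x * Real.log (d x)) := by
      intro x
      rcases (hnn l x).eq_or_lt with h0|h0
      · simp [← h0]
      · rw [Real.log_mul hw'.ne' (hd x h0).ne']; ring
    simp only [key]
    rw [Finset.sum_add_distrib, ← Finset.mul_sum, ← Finset.mul_sum, hrow l, mul_one]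

/-- positivity transfer from `wprod P` to `wprod c` -/
lemma wprod_c_pos (hnn : ∀ i j, 0 ≤ P i j) (hc : ∀ i j, 0 < P i j → 0 < c i j ∧ c i j < 1)
    {n : ℕ} (τ : Fin (n+1) → Fin N) (hpos : 0 < wprod P τ) : 0 < wprod c τ := by
  unfold wprod at *
  apply Finset.prod_pos
  intro t _
  have hne : P (τ t.castSucc) (τ t.succ) ≠ 0 := by
    intro h0
    exact absurd (Finset.prod_eq_zero (Finset.mem_univ t) h0) (ne_of_gt hpos)
  exact (hc _ _ ((hnn _ _).lt_of_ne (Ne.symm hne))).1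

noncomputable def FF (n : ℕ) : ℝ :=
  ∑ σ : Fin (n+1) → Fin N, mw q P σ * Real.log (mw q P σ)

noncomputable def LL (n : ℕ) : ℝ :=
  ∑ σ : Fin (n+1) → Fin N, mw q P σ * Real.log (wprod c σ)

lemma useq_eq (n : ℕ) : useq q P (n+1) = FF q P n := rfl

lemma lseq_eq (n : ℕ) : lseq q P c (n+1) = LL q P c n := rfl

lemma FF_step (hq : ∀ i, 0 < q i) (hnn : ∀ i j, 0 ≤ P i j) (hrow : ∀ i, ∑ j, P i j = 1)
    (n : ℕ) :
    FF q P (n+1) = FF q P n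
      + ∑ i, Matrix.vecMul q (P^n) i * ∑ j, P i j * Real.log (P i j) := by
  unfold FF
  rw [sum_snoc (N := N) (fun σ => mw q P σ * Real.log (mw q P σ))]
  have key : ∀ τ : Fin (n+1) → Fin N,
      ∑ x, mw q P (Fin.snoc τ x) * Real.log (mw q P (Fin.snoc τ x))
        = mw q P τ * Real.log (mw q P τ)
          + mw q P τ * ∑ x, P (τ (Fin.last n)) x * Real.log (P (τ (Fin.last n)) x) := by
    intro τ
    have : ∀ x : Fin N, mw q P (Fin.snoc τ x) * Real.log (mw q P (Fin.snoc τ x))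
        = (mw q P τ * P (τ (Fin.last n)) x) * Real.log (mw q P τ * P (τ (Fin.last n)) x) := by
      intro x; rw [mw_snoc]
    rw [Finset.sum_congr rfl fun x _ => this x]
    exact inner_sum_F P hnn hrow (mw_nonneg q P hq hnn τ) (τ (Fin.last n))
  rw [Finset.sum_congr rfl fun τ _ => key τ, Finset.sum_add_distrib]
  congr 1
  exact sum_mw_mul q P n (fun i => ∑ j, P i j * Real.log (P i j))

lemma LL_step (hq : ∀ i, 0 < q i) (hnn : ∀ i j, 0 ≤ P i j) (hrow : ∀ i, ∑ j, P i j = 1)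
    (hc : ∀ i j, 0 < P i j → 0 < c i j ∧ c i j < 1) (n : ℕ) :
    LL q P c (n+1) = LL q P c n
      + ∑ i, Matrix.vecMul q (P^n) i * ∑ j, P i j * Real.log (c i j) := by
  unfold LL
  rw [sum_snoc (N := N) (fun σ => mw q P σ * Real.log (wprod c σ))]
  have key : ∀ τ : Fin (n+1) → Fin N,
      ∑ x, mw q P (Fin.snoc τ x) * Real.log (wprod c (Fin.snoc τ x))
        = mw q P τ * Real.log (wprod c τ)
          + mw q P τ * ∑ x, P (τ (Fin.last n)) x * Real.log (c (τ (Fin.last n)) x) := by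
    intro τ
    have : ∀ x : Fin N, mw q P (Fin.snoc τ x) * Real.log (wprod c (Fin.snoc τ x))
        = (mw q P τ * P (τ (Fin.last n)) x)
            * Real.log (wprod c τ * c (τ (Fin.last n)) x) := by
      intro x; rw [mw_snoc, wprod_snoc]
    rw [Finset.sum_congr rfl fun x _ => this x]
    refine inner_sum_L P hnn hrow (mw_nonneg q P hq hnn τ) ?_ (τ (Fin.last n))
      (fun x hx => (hc _ _ hx).1)
    intro hm
    refine wprod_c_pos P c hnn hc τ ?_
    have : wprod P τ ≠ 0 := by
      intro h0
      rw [mw, h0, mul_zero] at hm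
      exact lt_irrefl 0 hm
    exact (Finset.prod_nonneg fun _ _ => hnn _ _).lt_of_ne (Ne.symm this)
  rw [Finset.sum_congr rfl fun τ _ => key τ, Finset.sum_add_distrib]
  congr 1
  exact sum_mw_mul q P n (fun i => ∑ j, P i j * Real.log (c i j))

lemma FF_formula (hq : ∀ i, 0 < q i) (hnn : ∀ i j, 0 ≤ P i j) (hrow : ∀ i, ∑ j, P i j = 1)
    (n : ℕ) :
    FF q P n = FF q P 0
      + ∑ m ∈ Finset.range n, ∑ i, Matrix.vecMul q (P^m) i * ∑ j, P i j * Real.log (P i j) := by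
  induction n with
  | zero => simp
  | succ n ih => rw [FF_step q P hq hnn hrow n, ih, Finset.sum_range_succ]; ring

lemma LL_formula (hq : ∀ i, 0 < q i) (hnn : ∀ i j, 0 ≤ P i j) (hrow : ∀ i, ∑ j, P i j = 1)
    (hc : ∀ i j, 0 < P i j → 0 < c i j ∧ c i j < 1) (n : ℕ) :
    LL q P c n = LL q P c 0
      + ∑ m ∈ Finset.range n, ∑ i, Matrix.vecMul q (P^m) i * ∑ j, P i j * Real.log (c i j) := by
  induction n with
  | zero => simp
  | succ n ih => rw [LL_step q P c hq hnn hrow hc n, ih, Finset.sum_range_succ]; ring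


lemma pow_nonneg' (hnn : ∀ i j, 0 ≤ P i j) : ∀ n i j, 0 ≤ (P^n) i j := by
  intro n
  induction n with
  | zero => intro i j; by_cases h : i = j <;> simp [Matrix.one_apply, h]
  | succ n ih =>
    intro i j
    rw [pow_succ, Matrix.mul_apply]
    exact Finset.sum_nonneg fun l _ => mul_nonneg (ih i l) (hnn l j)

lemma pow_row (hrow : ∀ i, ∑ j, P i j = 1) : ∀ n i, ∑ j, (P^n) i j = 1 := by
  intro n
  induction n with
  | zero => intro i; simp [Matrix.one_apply]
  | succ n ih =>
    intro i
    simp only [pow_succ, Matrix.mul_apply]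
    rw [Finset.sum_comm]
    calc ∑ l, ∑ j, (P^n) i l * P l j = ∑ l, (P^n) i l * ∑ j, P l j := by
          exact Finset.sum_congr rfl fun l _ => (Finset.mul_sum _ _ _).symm
      _ = 1 := by simp only [hrow, mul_one]; exact ih i

lemma powEntry_le_one (hnn : ∀ i j, 0 ≤ P i j) (hrow : ∀ i, ∑ j, P i j = 1) :
    ∀ n i j, (P^n) i j ≤ 1 := by
  intro n i j
  calc (P^n) i j ≤ ∑ l, (P^n) i l :=
        Finset.single_le_sum (fun l _ => pow_nonneg' P hnn n i l) (Finset.mem_univ j)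
    _ = 1 := pow_row P hrow n i

/-- a fixed vector of an irreducible stochastic matrix is constant -/
lemma fixed_const (hnn : ∀ i j, 0 ≤ P i j) (hrow : ∀ i, ∑ j, P i j = 1)
    (hirr : ∀ i j, ∃ m, 1 ≤ m ∧ 0 < (P ^ m) i j)
    (x : Fin N → ℝ) (hx : P.mulVec x = x) (hN : 0 < N) :
    ∀ i j : Fin N, x i = x j := by
  have hne : (Finset.univ : Finset (Fin N)).Nonempty := by
    have : Nonempty (Fin N) := ⟨⟨0, hN⟩⟩
    exact Finset.univ_nonempty
  obtain ⟨i0, -, hi0⟩ := Finset.exists_max_image Finset.univ x hne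
  have hmax : ∀ j, x j ≤ x i0 := fun j => hi0 j (Finset.mem_univ j)
  -- propagate equality along positive transitions
  have prop : ∀ l j, x l = x i0 → 0 < P l j → x j = x i0 := by
    intro l j hl hp
    have hxl : x l = ∑ t, P l t * x t := by
      rw [← congrFun hx l]; simp [Matrix.mulVec, dotProduct]
    have hzero : ∑ t, P l t * (x i0 - x t) = 0 := by
      have : ∑ t, P l t * (x i0 - x t) = (∑ t, P l t) * x i0 - ∑ t, P l t * x t := by
        rw [Finset.sum_mul, ← Finset.sum_sub_distrib]
        exact Finset.sum_congr rfl fun t _ => by ring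
      rw [this, hrow l, one_mul, ← hxl, hl, sub_self]
    have hterm : P l j * (x i0 - x j) = 0 := by
      have := (Finset.sum_eq_zero_iff_of_nonneg
        (fun t _ => mul_nonneg (hnn l t) (sub_nonneg.mpr (hmax t)))).mp hzero
      exact this j (Finset.mem_univ j)
    have := mul_eq_zero.mp hterm
    rcases this with h|h
    · exact absurd h (ne_of_gt hp)
    · linarith [sub_eq_zero.mp h]
  have key : ∀ m j, 0 < (P^m) i0 j → x j = x i0 := by
    intro m
    induction m with
    | zero =>
      intro j hj
      by_cases h : i0 = j
      · rw [← h]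
      · simp [Matrix.one_apply, h] at hj
    | succ m ih =>
      intro j hj
      rw [pow_succ, Matrix.mul_apply] at hj
      have : ∃ l, 0 < (P^m) i0 l * P l j := by
        by_contra hcon
        push_neg at hcon
        have : ∑ l, (P^m) i0 l * P l j ≤ 0 := Finset.sum_nonpos fun l _ => hcon l
        linarith
      obtain ⟨l, hl⟩ := this
      have h1 : 0 < (P^m) i0 l := by
        rcases (pow_nonneg' P hnn m i0 l).eq_or_lt with h|h
        · rw [← h, zero_mul] at hl; exact absurd hl (lt_irrefl 0)
        · exact h
      have h2 : 0 < P l j := by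
        rcases (hnn l j).eq_or_lt with h|h
        · rw [← h, mul_zero] at hl; exact absurd hl (lt_irrefl 0)
        · exact h
      exact prop l j (ih l h1) h2
  intro i j
  obtain ⟨mi, -, hmi⟩ := hirr i0 i
  obtain ⟨mj, -, hmj⟩ := hirr i0 j
  rw [key mi i hmi, key mj j hmj]


lemma partial_sum_bound (hnn : ∀ i j, 0 ≤ P i j) (hrow : ∀ i, ∑ j, P i j = 1)
    (hirr : ∀ i j, ∃ m, 1 ≤ m ∧ 0 < (P ^ m) i j)
    (q v : Fin N → ℝ) (hq1 : ∑ i, q i = 1)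
    (hvpos : ∀ i, 0 < v i) (hv1 : ∑ i, v i = 1)
    (hveig : ∀ j, ∑ i, v i * P i j = v j) (hN : 0 < N) :
    ∃ B : ℝ, ∀ (n : ℕ) (i : Fin N),
      |∑ m ∈ Finset.range n, (Matrix.vecMul q (P^m) i - v i)| ≤ B := by
  classical
  set J : Matrix (Fin N) (Fin N) ℝ := Matrix.of (fun _ j => v j) with hJdef
  have hJapp : ∀ i j, J i j = v j := fun i j => rfl
  have hPJ : P * J = J := by
    ext i j
    rw [Matrix.mul_apply]
    simp only [hJapp]
    rw [← Finset.sum_mul, hrow, one_mul]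
  have hJP : J * P = J := by
    ext i j
    rw [Matrix.mul_apply]
    simp only [hJapp]
    exact hveig j
  have hJJ : J * J = J := by
    ext i j
    rw [Matrix.mul_apply]
    simp only [hJapp]
    rw [← Finset.sum_mul, hv1, one_mul]
  have hPnJ : ∀ n, P^n * J = J := by
    intro n
    induction n with
    | zero => rw [pow_zero, one_mul]
    | succ n ih => rw [pow_succ, mul_assoc, hPJ, ih]
  set A : Matrix (Fin N) (Fin N) ℝ := P - J with hAdef
  have hApow : ∀ n, 1 ≤ n → A^n = P^n - J := by
    intro n hn
    induction n with
    | zero => omega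
    | succ n ih =>
      rcases Nat.eq_or_lt_of_le hn with h|h
      · rw [← h]; simp [hAdef]
      · have hn1 : 1 ≤ n := by omega
        rw [pow_succ, ih hn1, hAdef, sub_mul, mul_sub, mul_sub, hPnJ, hJP, hJJ, ← pow_succ]
        abel
  have habs : ∀ n i j, |(A^n) i j| ≤ 1 := by
    intro n i j
    rcases Nat.eq_zero_or_pos n with h|h
    · subst h
      rw [pow_zero]
      by_cases hij : i = j <;> simp [Matrix.one_apply, hij]
    · rw [hApow n h, Matrix.sub_apply, hJapp, abs_le]
      have h1 := pow_nonneg' P hnn n i j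
      have h2 := powEntry_le_one P hnn hrow n i j
      have h3 := (hvpos j).le
      have h4 : v j ≤ 1 := by
        rw [← hv1]
        exact Finset.single_le_sum (fun l _ => (hvpos l).le) (Finset.mem_univ j)
      constructor <;> linarith
  set M : Matrix (Fin N) (Fin N) ℝ := 1 - A with hMdef
  have hker : ∀ z : Fin N → ℝ, M.mulVec z = 0 → z = 0 := by
    intro z hz
    have hMapp : ∀ i, M.mulVec z i = z i - P.mulVec z i + ∑ j, v j * z j := by
      intro i
      simp only [hMdef, hAdef, Matrix.mulVec, dotProduct, Matrix.sub_apply,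
        Matrix.one_apply, hJapp]
      have e1 : ∀ x : Fin N, ((if i = x then (1:ℝ) else 0) - (P i x - v x)) * z x
          = (if i = x then z x else 0) - P i x * z x + v x * z x := by
        intro x; by_cases hij : i = x <;> simp [hij] <;> ring
      rw [Finset.sum_congr rfl fun x _ => e1 x, Finset.sum_add_distrib,
        Finset.sum_sub_distrib, Finset.sum_ite_eq]
      simp
    have hzero : ∀ i, z i - P.mulVec z i + ∑ j, v j * z j = 0 := by
      intro i
      rw [← hMapp i, hz]
      rfl
    have hPvz : ∑ i, v i * P.mulVec z i = ∑ j, v j * z j := by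
      calc ∑ i, v i * P.mulVec z i = ∑ i, ∑ j, v i * (P i j * z j) := by
            refine Finset.sum_congr rfl fun i _ => ?_
            simp only [Matrix.mulVec, dotProduct, Finset.mul_sum]
        _ = ∑ j, ∑ i, v i * (P i j * z j) := Finset.sum_comm
        _ = ∑ j, (∑ i, v i * P i j) * z j := by
            refine Finset.sum_congr rfl fun j _ => ?_
            rw [Finset.sum_mul]
            exact Finset.sum_congr rfl fun i _ => by ring
        _ = ∑ j, v j * z j := by
            refine Finset.sum_congr rfl fun j _ => ?_
            rw [hveig]
    have hcZ : ∑ j, v j * z j = 0 := by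
      have h1 : ∑ i, v i * (z i - P.mulVec z i + ∑ j, v j * z j) = 0 := by
        rw [Finset.sum_congr rfl fun i _ => by rw [hzero i]]
        simp
      have h2 : ∑ i, v i * (z i - P.mulVec z i + ∑ j, v j * z j)
          = ∑ i, v i * z i - ∑ i, v i * P.mulVec z i + (∑ i, v i) * (∑ j, v j * z j) := by
        rw [Finset.sum_mul, ← Finset.sum_sub_distrib, ← Finset.sum_add_distrib]
        exact Finset.sum_congr rfl fun i _ => by ring
      rw [h2, hPvz, hv1, one_mul, sub_self, zero_add] at h1
      exact h1
    have hfix : P.mulVec z = z := by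
      funext i
      have := hzero i
      rw [hcZ, add_zero, sub_eq_zero] at this
      exact this.symm
    have hconst := fixed_const P hnn hrow hirr z hfix hN
    set i0 : Fin N := ⟨0, hN⟩
    have hzi0 : z i0 = 0 := by
      have : ∑ j, v j * z j = z i0 := by
        calc ∑ j, v j * z j = ∑ j, v j * z i0 := by
              refine Finset.sum_congr rfl fun j _ => by rw [hconst j i0]
          _ = (∑ j, v j) * z i0 := by rw [Finset.sum_mul]
          _ = z i0 := by rw [hv1, one_mul]
      rw [← this, hcZ]
    funext j
    rw [Pi.zero_apply, hconst j i0, hzi0]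
  have hinj : Function.Injective M.mulVec := by
    intro x y hxy
    have := hker (x - y) (by rw [Matrix.mulVec_sub, hxy, sub_self])
    exact sub_eq_zero.mp this
  have hU : IsUnit M := Matrix.mulVec_injective_iff_isUnit.mp hinj
  have hdet : IsUnit M.det := (Matrix.isUnit_iff_isUnit_det M).mp hU
  have hMB : M * M⁻¹ = 1 := Matrix.mul_nonsing_inv M hdet
  set CB := ∑ l, ∑ j, |M⁻¹ l j| with hCBdef
  have hCB : ∀ l j, |M⁻¹ l j| ≤ CB := by
    intro l j
    calc |M⁻¹ l j| ≤ ∑ j', |M⁻¹ l j'| :=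
          Finset.single_le_sum (f := fun j' => |M⁻¹ l j'|) (fun _ _ => abs_nonneg _)
            (Finset.mem_univ j)
      _ ≤ CB := Finset.single_le_sum (f := fun l => ∑ j', |M⁻¹ l j'|)
          (fun _ _ => Finset.sum_nonneg fun _ _ => abs_nonneg _) (Finset.mem_univ l)
  have hGM : ∀ n : ℕ, (∑ m ∈ Finset.range n, A^m) * M = 1 - A^n := by
    intro n
    have h1 : (∑ m ∈ Finset.range n, A^m) * M = -((∑ m ∈ Finset.range n, A^m) * (A - 1)) := by
      rw [hMdef]
      noncomm_ring
    rw [h1, geom_sum_mul, neg_sub]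
  have hGeq : ∀ n : ℕ, (∑ m ∈ Finset.range n, A^m) = (1 - A^n) * M⁻¹ := by
    intro n
    calc (∑ m ∈ Finset.range n, A^m) = (∑ m ∈ Finset.range n, A^m) * (M * M⁻¹) := by
          rw [hMB, mul_one]
      _ = ((∑ m ∈ Finset.range n, A^m) * M) * M⁻¹ := by rw [mul_assoc]
      _ = (1 - A^n) * M⁻¹ := by rw [hGM]
  have hGbd : ∀ (n : ℕ) (l j : Fin N), |(∑ m ∈ Finset.range n, A^m) l j| ≤ N * (2 * CB) := by
    intro n l j
    rw [hGeq, Matrix.mul_apply]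
    calc |∑ t, (1 - A^n) l t * M⁻¹ t j| ≤ ∑ t, |(1 - A^n) l t * M⁻¹ t j| :=
          Finset.abs_sum_le_sum_abs _ _
      _ ≤ ∑ _t : Fin N, 2 * CB := by
          refine Finset.sum_le_sum fun t _ => ?_
          rw [abs_mul]
          have h1 : |(1 - A^n : Matrix (Fin N) (Fin N) ℝ) l t| ≤ 2 := by
            rw [Matrix.sub_apply]
            have h2 := habs n l t
            have hone : |(1 : Matrix (Fin N) (Fin N) ℝ) l t| ≤ 1 := by
              by_cases h : l = t <;> simp [Matrix.one_apply, h]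
            calc |(1 : Matrix (Fin N) (Fin N) ℝ) l t - (A^n) l t|
                ≤ |(1 : Matrix (Fin N) (Fin N) ℝ) l t| + |(A^n) l t| := abs_sub _ _
              _ ≤ 2 := by linarith
          have hCBnn : 0 ≤ |M⁻¹ t j| := abs_nonneg _
          calc |(1 - A^n : Matrix (Fin N) (Fin N) ℝ) l t| * |M⁻¹ t j|
              ≤ 2 * |M⁻¹ t j| := mul_le_mul_of_nonneg_right h1 hCBnn
            _ ≤ 2 * CB := by linarith [hCB t j]
      _ = N * (2 * CB) := by
          rw [Finset.sum_const, Finset.card_univ, Fintype.card_fin, nsmul_eq_mul]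
  -- conclusion
  have hvPn : ∀ m : ℕ, Matrix.vecMul v (P^m) = v := by
    intro m
    induction m with
    | zero => rw [pow_zero, Matrix.vecMul_one]
    | succ m ih =>
      rw [pow_succ, ← Matrix.vecMul_vecMul, ih]
      funext j
      rw [vecMul_apply]
      exact hveig j
  have hw0 : ∑ l, (q l - v l) = 0 := by
    rw [Finset.sum_sub_distrib, hq1, hv1, sub_self]
  have hrw : ∀ (m : ℕ) (i : Fin N),
      Matrix.vecMul q (P^m) i - v i = ∑ l, (q l - v l) * (A^m) l i := by
    intro m i
    rcases Nat.eq_zero_or_pos m with h|h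
    · subst h
      rw [pow_zero, pow_zero, Matrix.vecMul_one]
      simp [Matrix.one_apply, mul_ite]
    · rw [hApow m h]
      have e1 : ∀ l, (q l - v l) * (P^m - J) l i
          = (q l - v l) * (P^m) l i - (q l - v l) * v i := by
        intro l
        rw [Matrix.sub_apply, hJapp]
        ring
      rw [Finset.sum_congr rfl fun l _ => e1 l, Finset.sum_sub_distrib, ← Finset.sum_mul,
        hw0, zero_mul, sub_zero]
      have e2 : ∀ l, (q l - v l) * (P^m) l i = q l * (P^m) l i - v l * (P^m) l i := by
        intro l; ring
      rw [Finset.sum_congr rfl fun l _ => e2 l, Finset.sum_sub_distrib,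
        ← vecMul_apply, ← vecMul_apply, hvPn]
  refine ⟨(∑ l, |q l - v l|) * (N * (2 * CB)), ?_⟩
  intro n i
  have hsplit : ∑ m ∈ Finset.range n, (Matrix.vecMul q (P^m) i - v i)
      = ∑ l, (q l - v l) * (∑ m ∈ Finset.range n, A^m) l i := by
    rw [Finset.sum_congr rfl fun m _ => hrw m i, Finset.sum_comm]
    refine Finset.sum_congr rfl fun l _ => ?_
    rw [← Finset.mul_sum, Matrix.sum_apply]
  rw [hsplit]
  calc |∑ l, (q l - v l) * (∑ m ∈ Finset.range n, A^m) l i|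
      ≤ ∑ l, |(q l - v l) * (∑ m ∈ Finset.range n, A^m) l i| :=
        Finset.abs_sum_le_sum_abs _ _
    _ ≤ ∑ l, |q l - v l| * (N * (2 * CB)) := by
        refine Finset.sum_le_sum fun l _ => ?_
        rw [abs_mul]
        exact mul_le_mul_of_nonneg_left (hGbd n l i) (abs_nonneg _)
    _ = (∑ l, |q l - v l|) * (N * (2 * CB)) := by rw [Finset.sum_mul]


lemma key_dev (v : Fin N → ℝ) (B : ℝ)
    (hB : ∀ (n : ℕ) (i : Fin N),
      |∑ m ∈ Finset.range n, (Matrix.vecMul q (P^m) i - v i)| ≤ B)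
    (d : Fin N → ℝ) (n : ℕ) :
    |∑ m ∈ Finset.range n, (∑ i, Matrix.vecMul q (P^m) i * d i)
        - (n:ℝ) * ∑ i, v i * d i| ≤ ∑ i, B * |d i| := by
  have e1 : ∑ i, (∑ m ∈ Finset.range n, (Matrix.vecMul q (P^m) i - v i)) * d i
      = ∑ m ∈ Finset.range n, (∑ i, Matrix.vecMul q (P^m) i * d i)
          - (n:ℝ) * ∑ i, v i * d i := by
    calc ∑ i, (∑ m ∈ Finset.range n, (Matrix.vecMul q (P^m) i - v i)) * d i
        = ∑ i, ∑ m ∈ Finset.range n, (Matrix.vecMul q (P^m) i * d i - v i * d i) := by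
          refine Finset.sum_congr rfl fun i _ => ?_
          rw [Finset.sum_mul]
          exact Finset.sum_congr rfl fun m _ => by ring
      _ = ∑ m ∈ Finset.range n, ∑ i, (Matrix.vecMul q (P^m) i * d i - v i * d i) :=
          Finset.sum_comm
      _ = ∑ m ∈ Finset.range n, (∑ i, Matrix.vecMul q (P^m) i * d i - ∑ i, v i * d i) :=
          Finset.sum_congr rfl fun m _ => Finset.sum_sub_distrib _ _
      _ = ∑ m ∈ Finset.range n, (∑ i, Matrix.vecMul q (P^m) i * d i)
            - (n:ℝ) * ∑ i, v i * d i := by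
          rw [Finset.sum_sub_distrib, Finset.sum_const, Finset.card_range, nsmul_eq_mul]
  rw [← e1]
  calc |∑ i, (∑ m ∈ Finset.range n, (Matrix.vecMul q (P^m) i - v i)) * d i|
      ≤ ∑ i, |(∑ m ∈ Finset.range n, (Matrix.vecMul q (P^m) i - v i)) * d i| :=
        Finset.abs_sum_le_sum_abs _ _
    _ ≤ ∑ i, B * |d i| := by
        refine Finset.sum_le_sum fun i _ => ?_
        rw [abs_mul]
        exact mul_le_mul_of_nonneg_right (hB n i) (abs_nonneg _)

end aux

theorem stmt6 {N : ℕ} (P c : Matrix (Fin N) (Fin N) ℝ)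
    (hnn : ∀ i j, 0 ≤ P i j) (hrow : ∀ i, ∑ j, P i j = 1)
    (hirr : ∀ i j, ∃ m, 1 ≤ m ∧ 0 < (P ^ m) i j)
    (hc : ∀ i j, 0 < P i j → 0 < c i j ∧ c i j < 1)
    (hc0 : ∀ i j, P i j = 0 → c i j = 0)
    (q : Fin N → ℝ) (hq : ∀ i, 0 < q i) (hq1 : ∑ i, q i = 1)
    (v : Fin N → ℝ) (hvpos : ∀ i, 0 < v i) (hv1 : ∑ i, v i = 1)
    (hveig : ∀ j, ∑ i, v i * P i j = v j)
    (s0 : ℝ)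
    (hs0 : s0 = (∑ i, v i * ∑ j, P i j * Real.log (P i j)) /
                (∑ i, v i * ∑ j, P i j * Real.log (c i j))) :
    ∃ C2 : ℝ, ∃ K : ℕ, ∀ k : ℕ, K ≤ k →
      |useq q P k / lseq q P c k - s0| ≤ C2 / (k : ℝ) := by
  classical
  rcases Nat.eq_zero_or_pos N with hN0|hN
  · exfalso
    subst hN0
    simpa using hv1
  obtain ⟨B, hB⟩ := partial_sum_bound P hnn hrow hirr q v hq1 hvpos hv1 hveig hN
  have hBnn : 0 ≤ B := by
    have h := hB 0 ⟨0, hN⟩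
    simp only [Finset.range_zero, Finset.sum_empty, abs_zero] at h
    exact h
  -- abbreviations (plain terms)
  have hl0neg : (∑ i, v i * ∑ j, P i j * Real.log (c i j)) < 0 := by
    have hD2 : ∀ i, (∑ j, P i j * Real.log (c i j)) < 0 := by
      intro i
      have hex : ∃ j, 0 < P i j := by
        by_contra hcon
        push_neg at hcon
        have h1 : ∑ j, P i j ≤ 0 := Finset.sum_nonpos fun j _ => hcon j
        rw [hrow i] at h1
        linarith
      obtain ⟨j0, hj0⟩ := hex
      have hterm : ∀ j, P i j * Real.log (c i j) ≤ 0 := by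
        intro j
        rcases (hnn i j).eq_or_lt with h|h
        · rw [← h, zero_mul]
        · exact mul_nonpos_iff.mpr (Or.inl ⟨hnn i j,
            (Real.log_neg (hc i j h).1 (hc i j h).2).le⟩)
      have hj0term : P i j0 * Real.log (c i j0) < 0 :=
        mul_neg_of_pos_of_neg hj0 (Real.log_neg (hc i j0 hj0).1 (hc i j0 hj0).2)
      have := Finset.sum_lt_sum (f := fun j => P i j * Real.log (c i j))
        (g := fun _ => (0:ℝ)) (fun j _ => hterm j) ⟨j0, Finset.mem_univ j0, hj0term⟩
      simpa using this
    have hterm : ∀ i, v i * (∑ j, P i j * Real.log (c i j)) < 0 :=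
      fun i => mul_neg_of_pos_of_neg (hvpos i) (hD2 i)
    have hne : (Finset.univ : Finset (Fin N)).Nonempty := by
      have : Nonempty (Fin N) := ⟨⟨0, hN⟩⟩
      exact Finset.univ_nonempty
    have := Finset.sum_lt_sum_of_nonempty hne
      (f := fun i => v i * (∑ j, P i j * Real.log (c i j))) (g := fun _ => (0:ℝ))
      (fun i _ => hterm i)
    simpa using this
  set U0 : ℝ := ∑ i, v i * ∑ j, P i j * Real.log (P i j) with hU0
  set L0 : ℝ := ∑ i, v i * ∑ j, P i j * Real.log (c i j) with hL0
  -- deviation bounds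
  set Cu : ℝ := |FF q P 0| + (∑ i, B * |∑ j, P i j * Real.log (P i j)|) + |U0| with hCud
  set Cl : ℝ := |LL q P c 0| + (∑ i, B * |∑ j, P i j * Real.log (c i j)|) + |L0| with hCld
  have hCu0 : 0 ≤ Cu := by
    refine add_nonneg (add_nonneg (abs_nonneg _) ?_) (abs_nonneg _)
    exact Finset.sum_nonneg fun i _ => mul_nonneg hBnn (abs_nonneg _)
  have hCl0 : 0 ≤ Cl := by
    refine add_nonneg (add_nonneg (abs_nonneg _) ?_) (abs_nonneg _)
    exact Finset.sum_nonneg fun i _ => mul_nonneg hBnn (abs_nonneg _)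
  have hudev : ∀ n : ℕ, |FF q P n - ((n:ℝ)+1) * U0| ≤ Cu := by
    intro n
    have h1 := key_dev q P v B hB (fun i => ∑ j, P i j * Real.log (P i j)) n
    have h2 : FF q P n - ((n:ℝ)+1) * U0
        = FF q P 0 + ((∑ m ∈ Finset.range n, (∑ i, Matrix.vecMul q (P^m) i
            * ∑ j, P i j * Real.log (P i j))) - (n:ℝ) * U0) + (- U0) := by
      rw [FF_formula q P hq hnn hrow n]
      ring
    rw [h2]
    refine le_trans (abs_add_le _ _) ?_
    rw [hCud, abs_neg]
    refine add_le_add (le_trans (abs_add_le _ _) (add_le_add_right ?_ _)) le_rfl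
    simpa using h1
  have hldev : ∀ n : ℕ, |LL q P c n - ((n:ℝ)+1) * L0| ≤ Cl := by
    intro n
    have h1 := key_dev q P v B hB (fun i => ∑ j, P i j * Real.log (c i j)) n
    have h2 : LL q P c n - ((n:ℝ)+1) * L0
        = LL q P c 0 + ((∑ m ∈ Finset.range n, (∑ i, Matrix.vecMul q (P^m) i
            * ∑ j, P i j * Real.log (c i j))) - (n:ℝ) * L0) + (- L0) := by
      rw [LL_formula q P c hq hnn hrow hc n]
      ring
    rw [h2]
    refine le_trans (abs_add_le _ _) ?_
    rw [hCld, abs_neg]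
    refine add_le_add (le_trans (abs_add_le _ _) (add_le_add_right ?_ _)) le_rfl
    simpa using h1
  have hml0 : 0 < -L0 := by linarith
  have hl0ne : L0 ≠ 0 := ne_of_lt hl0neg
  have hL0sq : 0 < L0^2 := by positivity
  refine ⟨2 * (Cu * |L0| + Cl * |U0|) / (L0^2), max 1 ⌈(2*Cl) / (-L0)⌉₊ + 1, ?_⟩
  intro k hk
  have hk1 : 1 ≤ k := by
    have := le_max_left 1 ⌈(2*Cl) / (-L0)⌉₊
    omega
  have hkc : (2*Cl) / (-L0) ≤ (k:ℝ) := by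
    have h1 : ⌈(2*Cl) / (-L0)⌉₊ ≤ k := by
      have := le_max_right 1 ⌈(2*Cl) / (-L0)⌉₊
      omega
    exact le_trans (Nat.le_ceil _) (by exact_mod_cast h1)
  obtain ⟨n, rfl⟩ : ∃ n, k = n + 1 := ⟨k-1, by omega⟩
  rw [useq_eq q P n, lseq_eq q P c n]
  have hcast : ((n+1 : ℕ) : ℝ) = (n:ℝ) + 1 := by push_cast; ring
  rw [hcast] at hkc ⊢
  have hud := hudev n
  have hld := hldev n
  have hnpos : (0:ℝ) < (n:ℝ) + 1 := by positivity
  have hklb : 2*Cl ≤ ((n:ℝ)+1) * (-L0) := by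
    rw [div_le_iff₀ hml0] at hkc
    exact hkc
  have hlklb : ((n:ℝ)+1) * (-L0) / 2 ≤ |LL q P c n| := by
    have h1 : |((n:ℝ)+1) * L0| ≤ |LL q P c n| + Cl := by
      have e : ((n:ℝ)+1) * L0 = LL q P c n - (LL q P c n - ((n:ℝ)+1)*L0) := by ring
      rw [e]
      exact le_trans (abs_sub _ _) (add_le_add_right hld _)
    have h2 : |((n:ℝ)+1) * L0| = ((n:ℝ)+1) * (-L0) := by
      rw [abs_mul, abs_of_pos hnpos, abs_of_neg hl0neg]
    linarith
  have hlkpos : 0 < |LL q P c n| := by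
    have : 0 < ((n:ℝ)+1) * (-L0) / 2 := by positivity
    linarith
  have hlkne : LL q P c n ≠ 0 := by
    intro h0
    rw [h0, abs_zero] at hlkpos
    exact lt_irrefl 0 hlkpos
  rw [hs0, div_sub_div _ _ hlkne hl0ne, abs_div]
  have hnum : |FF q P n * L0 - LL q P c n * U0| ≤ Cu * |L0| + Cl * |U0| := by
    have e : FF q P n * L0 - LL q P c n * U0
        = (FF q P n - ((n:ℝ)+1)*U0) * L0 - (LL q P c n - ((n:ℝ)+1)*L0) * U0 := by ring
    rw [e]
    refine le_trans (abs_sub _ _) ?_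
    rw [abs_mul, abs_mul]
    exact add_le_add (mul_le_mul_of_nonneg_right hud (abs_nonneg _))
      (mul_le_mul_of_nonneg_right hld (abs_nonneg _))
  have hdenlb : ((n:ℝ)+1) * L0^2 / 2 ≤ |LL q P c n * L0| := by
    rw [abs_mul]
    have e : ((n:ℝ)+1) * L0^2/2 = (((n:ℝ)+1) * (-L0)/2) * (-L0) := by ring
    rw [e, abs_of_neg hl0neg]
    exact mul_le_mul_of_nonneg_right hlklb (by linarith)
  have hdenpos : 0 < ((n:ℝ)+1) * L0^2 / 2 := by positivity
  calc |FF q P n * L0 - LL q P c n * U0| / |LL q P c n * L0|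
      ≤ (Cu * |L0| + Cl * |U0|) / (((n:ℝ)+1) * L0^2 / 2) := by
        refine div_le_div₀ (add_nonneg (mul_nonneg hCu0 (abs_nonneg _))
          (mul_nonneg hCl0 (abs_nonneg _))) hnum hdenpos hdenlb
    _ = 2 * (Cu * |L0| + Cl * |U0|) / (L0^2) / ((n:ℝ)+1) := by
        field_simp
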